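/- Over F_2 (or any F_q), let C ⊆ F_q^4 be the linear code with generator matrix rows (1,1,0,0) and (0,0,1,1). Then C^(3) = C, dim C = 2, and dmin(C^(3)) = 2 = t - 1 for t = 3, showing the bound max(t-1, n+t-tk) = 2 in the product Singleton bound is attained when tk > n. -/

import Mathlib

noncomputable section

/-- The componentwise product code of two linear codes. -/
def prodCode (F : Type*) [Field F] {n : ℕ}
    (C C' : Submodule F (Fin n → F)) : Submodule F (Fin n → F) :=
  Submodule.span F {z | ∃ c ∈ C, ∃ c' ∈ C', z = c * c'}

/-- The t-fold componentwise power of a code (convention: 0th power is ⊤). -/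
def powCode (F : Type*) [Field F] {n : ℕ} (C : Submodule F (Fin n → F)) :
    ℕ → Submodule F (Fin n → F)
  | 0 => ⊤
  | 1 => C
  | (t+2) => prodCode F (powCode F C (t+1)) C

/-- Minimum distance: minimum Hamming weight of a nonzero codeword. -/
def dmin {F : Type*} [Field F] [DecidableEq F] {n : ℕ}
    (C : Submodule F (Fin n → F)) : ℕ :=
  sInf {w | ∃ c ∈ C, c ≠ 0 ∧ hammingNorm c = w}

/-- The dual code with respect to the standard bilinear form. -/
def dualCode (F : Type*) [Field F] {n : ℕ}
    (C : Submodule F (Fin n → F)) : Submodule F (Fin n → F) where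
  carrier := {x | ∀ c ∈ C, ∑ i, x i * c i = 0}
  zero_mem' := by intro c hc; simp
  add_mem' := by
    intro a b ha hb c hc
    have h : ∑ i, (a + b) i * c i = (∑ i, a i * c i) + ∑ i, b i * c i := by
      simp [add_mul, Finset.sum_add_distrib]
    simp only [Set.mem_setOf_eq] at *
    rw [h, ha c hc, hb c hc, add_zero]
  smul_mem' := by
    intro r a ha c hc
    simp only [Pi.smul_apply, smul_eq_mul, mul_assoc, ← Finset.mul_sum, Set.mem_setOf_eq] at *
    rw [ha c hc, mul_zero]

/-- A code has full support if every coordinate carries a nonzero codeword value. -/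
def fullSupport (F : Type*) [Field F] {n : ℕ} (C : Submodule F (Fin n → F)) : Prop :=
  ∀ j, ∃ c ∈ C, c j ≠ 0

/-- Product code of a family of codes. -/
def prodFamily (F : Type*) [Field F] {n t : ℕ}
    (C : Fin t → Submodule F (Fin n → F)) : Submodule F (Fin n → F) :=
  Submodule.span F {z | ∃ c : Fin t → (Fin n → F), (∀ i, c i ∈ C i) ∧ z = ∏ i, c i}


section aux
variable {F : Type*} [Field F]

lemma mem_C_iff (C : Submodule F (Fin 4 → F))
    (hC : C = Submodule.span F {![1, 1, 0, 0], ![0, 0, 1, 1]}) (x : Fin 4 → F) :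
    x ∈ C ↔ ∃ a b : F, a • ![1,1,0,0] + b • ![0,0,1,1] = x := by
  rw [hC, Submodule.mem_span_pair]

lemma prod_self (C : Submodule F (Fin 4 → F))
    (hC : C = Submodule.span F {![1, 1, 0, 0], ![0, 0, 1, 1]}) :
    prodCode F C C = C := by
  apply le_antisymm
  · rw [prodCode, Submodule.span_le]
    rintro z ⟨c, hc, c', hc', rfl⟩
    obtain ⟨a, b, rfl⟩ := (mem_C_iff C hC c).1 hc
    obtain ⟨a', b', rfl⟩ := (mem_C_iff C hC c').1 hc'
    rw [SetLike.mem_coe, mem_C_iff C hC]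
    refine ⟨a * a', b * b', ?_⟩
    funext i
    fin_cases i <;> simp [Matrix.cons_val_zero, Matrix.cons_val_one] <;> ring
  · conv_lhs => rw [hC]
    rw [Submodule.span_le]
    rintro z hz
    rcases hz with h | h
    · subst h
      apply Submodule.subset_span
      refine ⟨![1,1,0,0], ?_, ![1,1,0,0], ?_, ?_⟩
      · rw [mem_C_iff C hC]; exact ⟨1, 0, by funext i; fin_cases i <;> simp⟩
      · rw [mem_C_iff C hC]; exact ⟨1, 0, by funext i; fin_cases i <;> simp⟩
      · funext i; fin_cases i <;> simp
    · simp only [Set.mem_singleton_iff] at h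
      subst h
      apply Submodule.subset_span
      refine ⟨![0,0,1,1], ?_, ![0,0,1,1], ?_, ?_⟩
      · rw [mem_C_iff C hC]; exact ⟨0, 1, by funext i; fin_cases i <;> simp⟩
      · rw [mem_C_iff C hC]; exact ⟨0, 1, by funext i; fin_cases i <;> simp⟩
      · funext i; fin_cases i <;> simp

end aux

theorem stmt14 {F : Type*} [Field F] [Fintype F] [DecidableEq F]
    (C : Submodule F (Fin 4 → F))
    (hC : C = Submodule.span F {![1, 1, 0, 0], ![0, 0, 1, 1]}) :
    powCode F C 3 = C ∧ Module.finrank F C = 2 ∧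
      dmin (powCode F C 3) = 2 := by
  have h2 : powCode F C 2 = C := by
    show prodCode F (powCode F C 1) C = C
    exact prod_self C hC
  have h3 : powCode F C 3 = C := by
    show prodCode F (powCode F C 2) C = C
    rw [h2]; exact prod_self C hC
  refine ⟨h3, ?_, ?_⟩
  · -- finrank
    have hli : LinearIndependent F ![(![1,1,0,0] : Fin 4 → F), ![0,0,1,1]] := by
      rw [Fintype.linearIndependent_iff]
      intro g hg i
      have h0 := congrFun hg 0
      have h2' := congrFun hg 2
      simp [Fin.sum_univ_two] at h0 h2'
      fin_cases i <;> assumption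
    have := finrank_span_eq_card (R := F) hli
    have hr : Set.range ![(![1,1,0,0] : Fin 4 → F), ![0,0,1,1]] = {![1,1,0,0], ![0,0,1,1]} := by
      simp [Set.range_comp]
      ext x
      simp [Fin.exists_fin_two]
      tauto
    rw [hC]
    rw [← hr]
    simpa using this
  · rw [h3, dmin]
    have hmem : (2:ℕ) ∈ {w | ∃ c ∈ C, c ≠ 0 ∧ hammingNorm c = w} := by
      refine ⟨![1,1,0,0], ?_, ?_, ?_⟩
      · rw [mem_C_iff C hC]; exact ⟨1, 0, by funext i; fin_cases i <;> simp⟩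
      · intro h; have := congrFun h 0; simp at this
      · unfold hammingNorm
        rw [Finset.card_filter, Fin.sum_univ_four]
        simp [Matrix.cons_val_two, Matrix.cons_val_three]
    apply le_antisymm
    · exact Nat.sInf_le hmem
    · apply le_csInf ⟨2, hmem⟩
      rintro w ⟨c, hc, hne, rfl⟩
      obtain ⟨a, b, hcab⟩ := (mem_C_iff C hC c).1 hc
      have hab : a ≠ 0 ∨ b ≠ 0 := by
        by_contra h
        push_neg at h
        apply hne
        rw [← hcab, h.1, h.2]
        funext i; fin_cases i <;> simp
      rcases hab with ha | hb
      · have h0 : c 0 ≠ 0 := by rw [← hcab]; simpa using ha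
        have h1 : c 1 ≠ 0 := by rw [← hcab]; simpa using ha
        rw [hammingNorm]
        calc (2:ℕ) = ({0,1} : Finset (Fin 4)).card := by decide
        _ ≤ _ := Finset.card_le_card (by
            intro i hi
            fin_cases hi <;> simpa using ‹_›)
      · have h0 : c 2 ≠ 0 := by rw [← hcab]; simpa using hb
        have h1 : c 3 ≠ 0 := by rw [← hcab]; simpa using hb
        rw [hammingNorm]
        calc (2:ℕ) = ({2,3} : Finset (Fin 4)).card := by decide
        _ ≤ _ := Finset.card_le_card (by
            intro i hi
            fin_cases hi <;> simpa using ‹_›)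

end
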